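/- Let K and K̂ be real symmetric positive semidefinite N × N matrices, λ > 0, and z, k, k̂ ∈ ℝ^N. Then |zᵀ(K + λI)^{-1}k − zᵀ(K̂ + λI)^{-1}k̂| ≤ (‖z‖_2/λ) ‖k − k̂‖_2 + (‖z‖_2 ‖k‖_2 / λ²) ‖K − K̂‖_op, where ‖·‖_op denotes the matrix operator norm. -/

import Mathlib

open Matrix

/-- The Euclidean (ℓ²) norm of a vector in `ℝ^N`. -/
noncomputable def l2norm {N : ℕ} (v : Fin N → ℝ) : ℝ :=
  Real.sqrt (∑ i, v i ^ 2)

/-- The ℓ²-operator norm (largest singular value) of a real matrix. -/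
noncomputable def matOpNorm {N M : ℕ} (A : Matrix (Fin N) (Fin M) ℝ) : ℝ :=
  ‖LinearMap.toContinuousLinearMap (Matrix.toEuclideanLin A)‖

namespace Stmt13Aux

open RealInnerProductSpace

variable {N : ℕ}

/-- embed a plain vector into `EuclideanSpace`. -/
noncomputable def ev {N : ℕ} (v : Fin N → ℝ) : EuclideanSpace ℝ (Fin N) :=
  (WithLp.equiv 2 (Fin N → ℝ)).symm v

lemma norm_ev (v : Fin N → ℝ) : ‖ev v‖ = l2norm v := by
  rw [EuclideanSpace.norm_eq, l2norm]
  congr 1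
  refine Finset.sum_congr rfl fun i _ => ?_
  simp [ev, Real.norm_eq_abs, sq_abs]

lemma l2norm_nonneg (v : Fin N → ℝ) : 0 ≤ l2norm v := Real.sqrt_nonneg _

lemma sq_l2norm (v : Fin N → ℝ) : l2norm v ^ 2 = ∑ i, v i ^ 2 := by
  rw [l2norm, Real.sq_sqrt]
  exact Finset.sum_nonneg fun i _ => sq_nonneg _

noncomputable def T {N : ℕ} (A : Matrix (Fin N) (Fin N) ℝ) :
    EuclideanSpace ℝ (Fin N) →L[ℝ] EuclideanSpace ℝ (Fin N) :=
  LinearMap.toContinuousLinearMap (Matrix.toEuclideanLin A)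

lemma T_apply (A : Matrix (Fin N) (Fin N) ℝ) (v : Fin N → ℝ) :
    T A (ev v) = ev (A.mulVec v) := rfl

lemma norm_T (A : Matrix (Fin N) (Fin N) ℝ) : ‖T A‖ = matOpNorm A := rfl

lemma l2norm_mulVec_le (A : Matrix (Fin N) (Fin N) ℝ) (v : Fin N → ℝ) :
    l2norm (A.mulVec v) ≤ matOpNorm A * l2norm v := by
  rw [← norm_ev, ← norm_ev, ← T_apply, ← norm_T]
  exact (T A).le_opNorm _

lemma matOpNorm_neg (A : Matrix (Fin N) (Fin N) ℝ) :
    matOpNorm (-A) = matOpNorm A := by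
  unfold matOpNorm
  rw [map_neg, map_neg, norm_neg]

lemma dot_eq_inner (z w : Fin N → ℝ) : z ⬝ᵥ w = ⟪ev z, ev w⟫ := by
  simp [ev, PiLp.inner_apply, dotProduct, RCLike.inner_apply, mul_comm]

lemma abs_dot_le (z w : Fin N → ℝ) : |z ⬝ᵥ w| ≤ l2norm z * l2norm w := by
  rw [dot_eq_inner, ← norm_ev z, ← norm_ev w]
  exact abs_real_inner_le_norm _ _

lemma smul_one_posDef {lam : ℝ} (hlam : 0 < lam) :
    (lam • (1 : Matrix (Fin N) (Fin N) ℝ)).PosDef := by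
  refine Matrix.PosDef.of_dotProduct_mulVec_pos ?_ ?_
  · ext i j
    by_cases h : i = j
    · simp [Matrix.conjTranspose_apply, Matrix.one_apply, h]
    · simp [Matrix.conjTranspose_apply, Matrix.one_apply, h, Ne.symm h]
  · intro x hx
    have hsx : star x = x := funext fun i => star_trivial _
    rw [smul_mulVec, one_mulVec, dotProduct_smul, smul_eq_mul, hsx]
    have h1 : (0:ℝ) ≤ x ⬝ᵥ x :=
      Finset.sum_nonneg fun i _ => mul_self_nonneg _
    have h2 : x ⬝ᵥ x ≠ 0 := fun hc => hx (dotProduct_self_eq_zero.mp hc)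
    exact mul_pos hlam (lt_of_le_of_ne h1 (Ne.symm h2))

lemma regPosDef {K : Matrix (Fin N) (Fin N) ℝ} (hK : K.PosSemidef) {lam : ℝ}
    (hlam : 0 < lam) : (K + lam • (1 : Matrix (Fin N) (Fin N) ℝ)).PosDef :=
  Matrix.PosDef.posSemidef_add hK (smul_one_posDef hlam)

lemma inv_mulVec_bound {K : Matrix (Fin N) (Fin N) ℝ} (hK : K.PosSemidef) {lam : ℝ}
    (hlam : 0 < lam) (v : Fin N → ℝ) :
    l2norm ((K + lam • (1 : Matrix (Fin N) (Fin N) ℝ))⁻¹.mulVec v) ≤ l2norm v / lam := by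
  set A := K + lam • (1 : Matrix (Fin N) (Fin N) ℝ) with hAdef
  have hA : A.PosDef := regPosDef hK hlam
  have hAd : IsUnit A.det := (Matrix.isUnit_iff_isUnit_det A).mp hA.isUnit
  set u := A⁻¹.mulVec v with hu
  have hAu : A.mulVec u = v := by
    rw [hu, mulVec_mulVec, Matrix.mul_nonsing_inv _ hAd, one_mulVec]
  have key : lam * l2norm u ^ 2 ≤ l2norm u * l2norm v := by
    have h1 : lam * l2norm u ^ 2 ≤ u ⬝ᵥ v := by
      rw [← hAu, hAdef, add_mulVec, dotProduct_add, smul_mulVec, one_mulVec,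
        dotProduct_smul, smul_eq_mul, sq_l2norm]
      have h2 : (0:ℝ) ≤ u ⬝ᵥ K.mulVec u := by
        have := hK.dotProduct_mulVec_nonneg u
        simpa using this
      have h3 : u ⬝ᵥ u = ∑ i, u i ^ 2 := by
        simp [dotProduct, pow_two]
      nlinarith
    calc lam * l2norm u ^ 2 ≤ u ⬝ᵥ v := h1
      _ ≤ |u ⬝ᵥ v| := le_abs_self _
      _ ≤ l2norm u * l2norm v := abs_dot_le _ _
  rcases eq_or_lt_of_le (l2norm_nonneg u) with h | h
  · rw [← h]
    exact div_nonneg (l2norm_nonneg v) hlam.le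
  · rw [le_div_iff₀ hlam]
    nlinarith

end Stmt13Aux

open Stmt13Aux

/-- perturbation bound for the kernel-ridge posterior mean: for real
symmetric positive semidefinite `K, K̂`, `λ > 0` and vectors `z, k, k̂`,
`|zᵀ(K + λI)⁻¹k - zᵀ(K̂ + λI)⁻¹k̂| ≤ (‖z‖₂/λ) ‖k - k̂‖₂ + (‖z‖₂ ‖k‖₂/λ²) ‖K - K̂‖_op`. -/
theorem stmt_13 {N : ℕ} (K Khat : Matrix (Fin N) (Fin N) ℝ)
    (hK : K.PosSemidef) (hKhat : Khat.PosSemidef)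
    (lam : ℝ) (hlam : 0 < lam) (z k khat : Fin N → ℝ) :
    |z ⬝ᵥ (K + lam • (1 : Matrix (Fin N) (Fin N) ℝ))⁻¹.mulVec k -
        z ⬝ᵥ (Khat + lam • (1 : Matrix (Fin N) (Fin N) ℝ))⁻¹.mulVec khat|
      ≤ (l2norm z / lam) * l2norm (k - khat) +
        (l2norm z * l2norm k / lam ^ 2) * matOpNorm (K - Khat) := by
  set A := K + lam • (1 : Matrix (Fin N) (Fin N) ℝ) with hAdef
  set B := Khat + lam • (1 : Matrix (Fin N) (Fin N) ℝ) with hBdef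
  have hA : A.PosDef := regPosDef hK hlam
  have hB : B.PosDef := regPosDef hKhat hlam
  have hAd : IsUnit A.det := (Matrix.isUnit_iff_isUnit_det A).mp hA.isUnit
  have hBd : IsUnit B.det := (Matrix.isUnit_iff_isUnit_det B).mp hB.isUnit
  have hmat : A⁻¹ * (B - A) * B⁻¹ = A⁻¹ - B⁻¹ := by
    rw [Matrix.mul_sub, Matrix.sub_mul, Matrix.mul_assoc,
      Matrix.mul_nonsing_inv _ hBd, Matrix.nonsing_inv_mul _ hAd,
      Matrix.mul_one, Matrix.one_mul]
  have key : A⁻¹.mulVec k - B⁻¹.mulVec khat =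
      B⁻¹.mulVec (k - khat) + (A⁻¹ * (B - A) * B⁻¹).mulVec k := by
    rw [hmat, Matrix.sub_mulVec, Matrix.mulVec_sub]
    abel
  have hdot : z ⬝ᵥ A⁻¹.mulVec k - z ⬝ᵥ B⁻¹.mulVec khat =
      z ⬝ᵥ B⁻¹.mulVec (k - khat) + z ⬝ᵥ (A⁻¹ * (B - A) * B⁻¹).mulVec k := by
    rw [← dotProduct_add, ← key, dotProduct_sub]
  rw [hdot]
  have hz := l2norm_nonneg z
  have hk := l2norm_nonneg k
  -- term 1
  have t1 : |z ⬝ᵥ B⁻¹.mulVec (k - khat)| ≤ (l2norm z / lam) * l2norm (k - khat) := by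
    calc |z ⬝ᵥ B⁻¹.mulVec (k - khat)| ≤ l2norm z * l2norm (B⁻¹.mulVec (k - khat)) :=
        abs_dot_le _ _
      _ ≤ l2norm z * (l2norm (k - khat) / lam) :=
        mul_le_mul_of_nonneg_left (inv_mulVec_bound hKhat hlam _) hz
      _ = (l2norm z / lam) * l2norm (k - khat) := by ring
  -- term 2
  have t2 : |z ⬝ᵥ (A⁻¹ * (B - A) * B⁻¹).mulVec k| ≤
      (l2norm z * l2norm k / lam ^ 2) * matOpNorm (K - Khat) := by
    have hBA : B - A = -(K - Khat) := by
      rw [hAdef, hBdef]; abel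
    have hop : matOpNorm (B - A) = matOpNorm (K - Khat) := by
      rw [hBA, matOpNorm_neg]
    have hvec : (A⁻¹ * (B - A) * B⁻¹).mulVec k =
        A⁻¹.mulVec ((B - A).mulVec (B⁻¹.mulVec k)) := by
      rw [← mulVec_mulVec, ← mulVec_mulVec]
    have hopn : (0:ℝ) ≤ matOpNorm (B - A) := by
      rw [← norm_T]; exact norm_nonneg _
    have b3 : l2norm (B⁻¹.mulVec k) ≤ l2norm k / lam := inv_mulVec_bound hKhat hlam _
    have b2 : l2norm ((B - A).mulVec (B⁻¹.mulVec k)) ≤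
        matOpNorm (B - A) * (l2norm k / lam) :=
      (l2norm_mulVec_le _ _).trans (mul_le_mul_of_nonneg_left b3 hopn)
    have b1 : l2norm (A⁻¹.mulVec ((B - A).mulVec (B⁻¹.mulVec k))) ≤
        matOpNorm (B - A) * (l2norm k / lam) / lam :=
      (inv_mulVec_bound hK hlam _).trans (div_le_div_of_nonneg_right b2 hlam.le)
    calc |z ⬝ᵥ (A⁻¹ * (B - A) * B⁻¹).mulVec k|
        ≤ l2norm z * l2norm ((A⁻¹ * (B - A) * B⁻¹).mulVec k) := abs_dot_le _ _
      _ ≤ l2norm z * (matOpNorm (B - A) * (l2norm k / lam) / lam) := by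
          rw [hvec]; exact mul_le_mul_of_nonneg_left b1 hz
      _ = (l2norm z * l2norm k / lam ^ 2) * matOpNorm (B - A) := by
          field_simp
      _ = (l2norm z * l2norm k / lam ^ 2) * matOpNorm (K - Khat) := by rw [hop]
  calc |z ⬝ᵥ B⁻¹.mulVec (k - khat) + z ⬝ᵥ (A⁻¹ * (B - A) * B⁻¹).mulVec k|
      ≤ |z ⬝ᵥ B⁻¹.mulVec (k - khat)| + |z ⬝ᵥ (A⁻¹ * (B - A) * B⁻¹).mulVec k| :=
        abs_add_le _ _
    _ ≤ _ := add_le_add t1 t2
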